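/- arXiv:2508.12018 — 4 statements merged into one kernel-verified Lean document; each statement's English description precedes it below -/
import Mathlib

section
/- Let μ be a singular cardinal with cofinality κ, let δ ≤ μ be an ordinal, and let I be a κ⁺-complete proper ideal on δ. If there exists an I-almost distinct family F of functions from δ to κ, then 𝔡_μ ≥ |F|. -/
universe u

open Cardinal

/-- An ideal on a set (type) `A`: a collection of subsets of `A` closed under
taking subsets and finite unions. -/
def IsSetIdeal {A : Type u} (I : Set (Set A)) : Prop :=
  (∀ s t : Set A, s ⊆ t → t ∈ I → s ∈ I) ∧
  (∀ s t : Set A, s ∈ I → t ∈ I → s ∪ t ∈ I)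

/-- An ideal `I` is `θ`-complete if the union of any family of fewer than `θ`
members of `I` is again in `I`. -/
def IdealComplete {A : Type u} (I : Set (Set A)) (θ : Cardinal.{u}) : Prop :=
  ∀ S : Set (Set A), S ⊆ I → #S < θ → ⋃₀ S ∈ I

/-- `D` is a dominating family of functions `μ → κ`: every `f : μ → κ` is
dominated by some `g ∈ D`, i.e. `{α < μ : g(α) ≤ f(α)}` has cardinality `< μ`. -/
def IsDominatingFamily (μ κ : Cardinal.{u})
    (D : Set (μ.ord.ToType → κ.ord.ToType)) : Prop :=
  ∀ f : μ.ord.ToType → κ.ord.ToType, ∃ g ∈ D, #{α | g α ≤ f α} < μ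

/-- `𝔡_μ`: the least cardinality of a dominating family of functions `μ → κ`. -/
noncomputable def domNumber (μ κ : Cardinal.{u}) : Cardinal.{u} :=
  sInf {c | ∃ D : Set (μ.ord.ToType → κ.ord.ToType), IsDominatingFamily μ κ D ∧ #D = c}

/-- Auxiliary: the cardinality of the canonical type of an ordinal. -/
lemma aux_mk_toType (o : Ordinal.{u}) : #o.ToType = o.card := by
  haveI : IsWellOrder o.ToType (· < ·) := isWellOrder_lt
  exact (Ordinal.card_type ((· < ·) : o.ToType → o.ToType → Prop)).symm.trans
    (congrArg Ordinal.card (Ordinal.type_toType o))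

/-- Auxiliary: in the canonical type of a regular cardinal, every small set is
strictly bounded. -/
lemma aux_bound (κ : Cardinal.{u}) (hreg : κ.ord.cof = κ)
    (s : Set κ.ord.ToType) (hs : #s < κ) : ∃ b, ∀ y ∈ s, y < b := by
  haveI : IsWellOrder κ.ord.ToType (· < ·) := isWellOrder_lt
  by_contra h
  push_neg at h
  have hc := Order.cof_le (s := s) h
  rw [Ordinal.cof_toType, hreg] at hc
  exact absurd hs (not_lt.2 hc)

/-- Auxiliary: initial segments of the canonical type of a cardinal are small. -/
lemma aux_Iio (κ : Cardinal.{u}) (x : κ.ord.ToType) :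
    #{y : κ.ord.ToType // y < x} < κ := by
  haveI : IsWellOrder κ.ord.ToType (· < ·) := isWellOrder_lt
  have h1 : #{y : κ.ord.ToType // y < x} =
      (Ordinal.typein ((· < ·) : κ.ord.ToType → κ.ord.ToType → Prop) x).card :=
    Ordinal.card_typein x
  rw [h1]
  refine Cardinal.lt_ord.1 ?_
  have h2 := Ordinal.typein_lt_type ((· < ·) : κ.ord.ToType → κ.ord.ToType → Prop) x
  rwa [Ordinal.type_toType κ.ord] at h2

/-- Let `μ` be a singular cardinal of cofinality `κ`, `δ ≤ μ`
an ordinal, and `I` a `κ⁺`-complete proper ideal on `δ`.  If `F ⊆ κ^δ` is an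
`I`-almost distinct family, then `𝔡_μ ≥ |F|`. -/
theorem domNumber_ge_of_adf (μ κ : Cardinal.{u})
    (hμ : ℵ₀ ≤ μ) (hsing : μ.ord.cof < μ) (hκ : μ.ord.cof = κ)
    (δ : Ordinal.{u}) (hδ : δ ≤ μ.ord)
    (I : Set (Set δ.ToType)) (hI : IsSetIdeal I)
    (hproper : Set.univ ∉ I)
    (hcomp : IdealComplete I (Order.succ κ))
    (F : Set (δ.ToType → κ.ord.ToType))
    (hF : ∀ f ∈ F, ∀ g ∈ F, f ≠ g → {a | f a = g a} ∈ I) :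
    #F ≤ domNumber μ κ := by
  classical
  haveI iM : IsWellOrder μ.ord.ToType (· < ·) := isWellOrder_lt
  have hμlim : Order.IsSuccLimit μ.ord := Cardinal.isSuccLimit_ord hμ
  have hκinf : ℵ₀ ≤ κ := hκ ▸ Ordinal.aleph0_le_cof.2 hμlim
  have hκμ : κ < μ := hκ ▸ hsing
  have hreg : κ.ord.cof = κ := by
    rw [← hκ]; exact Ordinal.cof_ord_cof μ.ord
  have hmkM : #μ.ord.ToType = μ := Cardinal.mk_ord_toType μ
  have hmkK : #κ.ord.ToType = κ := Cardinal.mk_ord_toType κ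
  -- Step A : there is a dominating family, so `domNumber` is attained.
  have hne : {c | ∃ D : Set (μ.ord.ToType → κ.ord.ToType),
      IsDominatingFamily μ κ D ∧ #D = c}.Nonempty := by
    refine ⟨#(Set.univ : Set (μ.ord.ToType → κ.ord.ToType)), Set.univ, ?_, rfl⟩
    intro f
    have hgex : ∀ α : μ.ord.ToType, ∃ b : κ.ord.ToType, f α < b := by
      intro α
      obtain ⟨b, hb⟩ := aux_bound κ hreg {f α}
        (by rw [Cardinal.mk_singleton]; exact lt_of_lt_of_le Cardinal.one_lt_aleph0 hκinf)
      exact ⟨b, hb _ rfl⟩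
    choose g hg using hgex
    refine ⟨g, Set.mem_univ g, ?_⟩
    have hempty : {α | g α ≤ f α} = (∅ : Set μ.ord.ToType) := by
      ext α
      simp only [Set.mem_setOf_eq, Set.mem_empty_iff_false, iff_false, not_le]
      exact hg α
    rw [hempty, Cardinal.mk_emptyCollection]
    exact lt_of_lt_of_le Cardinal.aleph0_pos hμ
  obtain ⟨D, hD, hDcard⟩ : ∃ D : Set (μ.ord.ToType → κ.ord.ToType),
      IsDominatingFamily μ κ D ∧ #D = domNumber μ κ := csInf_mem hne
  -- Step B : κ ≤ #D
  have hκD : κ ≤ #D := by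
    by_contra h
    push_neg at h
    have hfex : ∀ α : μ.ord.ToType, ∃ b : κ.ord.ToType, ∀ g ∈ D, g α < b := by
      intro α
      obtain ⟨b, hb⟩ := aux_bound κ hreg ((fun g : μ.ord.ToType → κ.ord.ToType => g α) '' D)
        (lt_of_le_of_lt Cardinal.mk_image_le h)
      exact ⟨b, fun g hg => hb _ ⟨g, hg, rfl⟩⟩
    choose f hf using hfex
    obtain ⟨g, hgD, hgdom⟩ := hD f
    have huniv : {α | g α ≤ f α} = (Set.univ : Set μ.ord.ToType) := by
      ext α
      simp only [Set.mem_setOf_eq, Set.mem_univ, iff_true]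
      exact le_of_lt (hf α g hgD)
    rw [huniv, Cardinal.mk_univ, hmkM] at hgdom
    exact lt_irrefl μ hgdom
  have hDinf : ℵ₀ ≤ #D := le_trans hκinf hκD
  -- Step C : δ.ToType is nonempty
  have hΔne : Nonempty δ.ToType := by
    by_contra h
    rw [not_nonempty_iff] at h
    have h0 : (∅ : Set (Set δ.ToType)) ⊆ I := Set.empty_subset I
    have h1 : #(∅ : Set (Set δ.ToType)) < Order.succ κ := by
      rw [Cardinal.mk_emptyCollection]
      exact lt_of_le_of_lt (Cardinal.zero_le κ) (Order.lt_succ κ)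
    have h2 : (∅ : Set δ.ToType) ∈ I := by
      have h3 := hcomp ∅ h0 h1
      rwa [Set.sUnion_empty] at h3
    have h3 : (Set.univ : Set δ.ToType) = ∅ := Set.univ_eq_empty_iff.2 h
    exact hproper (h3 ▸ h2)
  -- Step D : a projection π : μ → δ all of whose fibers avoid small sets
  have hΔle : #δ.ToType ≤ μ := by
    rw [aux_mk_toType δ]
    calc δ.card ≤ μ.ord.card := Ordinal.card_le_card hδ
      _ = μ := Cardinal.card_ord μ
  have hmk : #μ.ord.ToType = #(δ.ToType × μ.ord.ToType) := by
    simp only [Cardinal.mk_prod, Cardinal.lift_id]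
    rw [hmkM, Cardinal.mul_eq_right hμ hΔle (Cardinal.mk_ne_zero _)]
  obtain ⟨e⟩ := Cardinal.eq.1 hmk
  set π : μ.ord.ToType → δ.ToType := fun m => (e m).1 with hπdef
  have hπ : ∀ (a : δ.ToType) (W : Set μ.ord.ToType), #W < μ →
      ∃ α, π α = a ∧ α ∉ W := by
    intro a W hW
    by_contra h
    push_neg at h
    have hμW : μ ≤ #W := by
      refine le_trans hmkM.ge ?_
      refine Cardinal.mk_le_of_injective (f := fun m : μ.ord.ToType =>
        (⟨e.symm (a, m), h _ (by simp [hπdef])⟩ : W)) ?_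
      intro x y hxy
      have h1 : e.symm (a, x) = e.symm (a, y) := congrArg Subtype.val hxy
      have h2 : ((a, x) : δ.ToType × μ.ord.ToType) = (a, y) := e.symm.injective h1
      exact congrArg Prod.snd h2
    exact absurd (lt_of_le_of_lt hμW hW) (lt_irrefl μ)
  -- Step E : a κ-sized cofinal family of cardinals below μ
  obtain ⟨S, hSub, hScard⟩ :=
    Order.exists_cof_eq (α := μ.ord.ToType)
  set bnd : μ.ord.ToType → Cardinal.{u} :=
    fun x => (Ordinal.typein ((· < ·) : μ.ord.ToType → μ.ord.ToType → Prop) x).card with hbnddef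
  have hScard' : #S = κ := by
    rw [hScard, Ordinal.cof_toType, hκ]
  have hCμ : ∀ x : μ.ord.ToType, bnd x < μ := by
    intro x
    refine Cardinal.lt_ord.1 ?_
    have h2 := Ordinal.typein_lt_type ((· < ·) : μ.ord.ToType → μ.ord.ToType → Prop) x
    rwa [Ordinal.type_toType μ.ord] at h2
  have hCcof : ∀ c : Cardinal.{u}, c < μ → ∃ x ∈ S, c ≤ bnd x := by
    intro c hc
    have h1 : c.ord < Ordinal.type ((· < ·) : μ.ord.ToType → μ.ord.ToType → Prop) := by
      rw [Ordinal.type_toType μ.ord]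
      exact Cardinal.ord_lt_ord.2 hc
    obtain ⟨y, hy⟩ := Ordinal.typein_surj _ h1
    obtain ⟨x, hxS, hxy⟩ := hSub y
    refine ⟨x, hxS, ?_⟩
    calc c = (Ordinal.typein ((· < ·) : μ.ord.ToType → μ.ord.ToType → Prop) y).card := by
          rw [hy, Cardinal.card_ord]
      _ ≤ _ := Ordinal.card_le_card ((Ordinal.typein_le_typein _).2 (not_lt.2 hxy))
  -- Step F : the coding map Φ : F → D × C
  have hchoice : ∀ f : ↥F, ∃ p : ↥D × ↥S,
      #{α | p.1.1 α ≤ f.1 (π α)} ≤ bnd p.2.1 := by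
    intro f
    obtain ⟨g, hgD, hgdom⟩ := hD (fun α => f.1 (π α))
    obtain ⟨x, hxS, hcd⟩ := hCcof _ hgdom
    exact ⟨(⟨g, hgD⟩, ⟨x, hxS⟩), hcd⟩
  choose Φ hΦ using hchoice
  -- fibers of Φ have size at most κ
  have hfiber : ∀ p : ↥D × ↥S, #(Φ ⁻¹' {p}) ≤ κ := by
    intro p
    by_contra h
    push_neg at h
    obtain ⟨ι⟩ := (Cardinal.le_def _ _).1 (le_trans hmkK.le (le_of_lt h))
    set q : κ.ord.ToType → (δ.ToType → κ.ord.ToType) := fun i => ((ι i).1 : ↥F).1 with hqdef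
    have hqF : ∀ i, q i ∈ F := fun i => ((ι i).1 : ↥F).2
    have hqinj : Function.Injective q := by
      intro i j hij
      exact ι.injective (Subtype.ext (Subtype.ext hij))
    have hqT : ∀ i, #{α | p.1.1 α ≤ q i (π α)} ≤ bnd p.2.1 := by
      intro i
      have h1 := hΦ (ι i).1
      have h2 : Φ (ι i).1 = p := (ι i).2
      rwa [h2] at h1
    set SS : Set (Set δ.ToType) :=
      (fun pr : κ.ord.ToType × κ.ord.ToType => {a | q pr.1 a = q pr.2 a}) ''
        {pr | pr.1 ≠ pr.2} with hSSdef
    have hSS_I : SS ⊆ I := by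
      rintro s ⟨⟨i, j⟩, hne', rfl⟩
      exact hF _ (hqF i) _ (hqF j) (fun hh => hne' (hqinj hh))
    have hSScard : #SS < Order.succ κ := by
      refine lt_of_le_of_lt ?_ (Order.lt_succ κ)
      refine le_trans Cardinal.mk_image_le ?_
      refine le_trans (Cardinal.mk_set_le _) ?_
      simp only [Cardinal.mk_prod, Cardinal.lift_id]
      rw [hmkK, Cardinal.mul_eq_self hκinf]
    have hV : ⋃₀ SS ∈ I := hcomp SS hSS_I hSScard
    obtain ⟨a, ha⟩ : ∃ a : δ.ToType, a ∉ ⋃₀ SS := by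
      by_contra h'
      push_neg at h'
      exact hproper (hI.1 Set.univ (⋃₀ SS) (fun a _ => h' a) hV)
    set W : Set μ.ord.ToType := ⋃ i : κ.ord.ToType, {α | p.1.1 α ≤ q i (π α)} with hWdef
    have hW : #W < μ := by
      refine lt_of_le_of_lt (Cardinal.mk_iUnion_le _) ?_
      have hsup : ⨆ i : κ.ord.ToType, #{α | p.1.1 α ≤ q i (π α)} ≤ bnd p.2.1 :=
        ciSup_le' fun i => hqT i
      refine lt_of_le_of_lt (mul_le_mul' le_rfl hsup) ?_
      refine lt_of_le_of_lt (mul_le_mul' hmkK.le le_rfl) ?_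
      exact Cardinal.mul_lt_of_lt hμ hκμ (hCμ p.2.1)
    obtain ⟨α, hπα, hαW⟩ := hπ a W hW
    have hlt : ∀ i : κ.ord.ToType, q i a < p.1.1 α := by
      intro i
      have h1 : α ∉ {α | p.1.1 α ≤ q i (π α)} := fun hh =>
        hαW (Set.mem_iUnion.2 ⟨i, hh⟩)
      rw [Set.mem_setOf_eq, hπα] at h1
      exact lt_of_not_ge h1
    have hvalinj : Function.Injective (fun i : κ.ord.ToType => q i a) := by
      intro i j hij
      by_contra hne'
      have hmem : {x | q i x = q j x} ∈ SS := ⟨(i, j), hne', rfl⟩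
      exact ha (Set.mem_sUnion.2 ⟨_, hmem, hij⟩)
    have hκle : κ ≤ #{y : κ.ord.ToType // y < p.1.1 α} := by
      refine le_trans hmkK.ge ?_
      refine Cardinal.mk_le_of_injective (f := fun i : κ.ord.ToType =>
        (⟨q i a, hlt i⟩ : {y : κ.ord.ToType // y < p.1.1 α})) ?_
      intro i j hij
      exact hvalinj (congrArg Subtype.val hij)
    exact absurd hκle (not_le.2 (aux_Iio κ (p.1.1 α)))
  -- putting everything together
  have hcount : #(↥F) ≤ #(↥D × ↥S) * κ := Cardinal.mk_le_mk_mul_of_mk_preimage_le Φ hfiber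
  have hprod : #(↥D × ↥S) ≤ #D * κ := by
    simp only [Cardinal.mk_prod, Cardinal.lift_id]
    rw [hScard']
  have hfinal : #(↥F) ≤ #D * κ * κ := le_trans hcount (mul_le_mul' hprod le_rfl)
  rwa [mul_assoc, Cardinal.mul_eq_self hκinf,
    Cardinal.mul_eq_left hDinf hκD (Cardinal.aleph0_pos.trans_le hκinf).ne', hDcard] at hfinal
end

section
/- Let λ₀, λ₁, λ₂, λ₃ be cardinals with λ₁ ≤ λ₂, and let I, J be ideals on sets A, B respectively. Suppose F is an I-almost distinct family of functions from A to λ₁ with |F| = λ₀, and G is a J-almost distinct family of functions from B to λ₃ with |G| = λ₂. Then there is an (I × J)-almost distinct family H of functions from A × B to λ₃ with |H| = λ₀. -/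
universe u

open Cardinal

/-- The Fubini product ideal `I × J` on `A × B`:
`X ∈ I × J` iff `{a ∈ A : {b ∈ B : (a,b) ∈ X} ∉ J} ∈ I`. -/
def fubiniProd {A B : Type u} (I : Set (Set A)) (J : Set (Set B)) :
    Set (Set (A × B)) :=
  {X | {a : A | {b : B | (a, b) ∈ X} ∉ J} ∈ I}

/-- If `F` is an `I`-a.d.f. of functions `A → λ₁` with
`|F| = λ₀`, `G` is a `J`-a.d.f. of functions `B → λ₃` with `|G| = λ₂`, and
`λ₁ ≤ λ₂`, then there is an `(I × J)`-a.d.f. `H` of functions `A × B → λ₃`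
with `|H| = λ₀`. -/
theorem combine_adfs {A B : Type u} (lam0 lam1 lam2 lam3 : Cardinal.{u})
    (h12 : lam1 ≤ lam2)
    (I : Set (Set A)) (J : Set (Set B))
    (hI : IsSetIdeal I) (hJ : IsSetIdeal J)
    (F : Set (A → lam1.ord.ToType))
    (hFad : ∀ f ∈ F, ∀ g ∈ F, f ≠ g → {a | f a = g a} ∈ I)
    (hFcard : #F = lam0)
    (G : Set (B → lam3.ord.ToType))
    (hGad : ∀ f ∈ G, ∀ g ∈ G, f ≠ g → {b | f b = g b} ∈ J)
    (hGcard : #G = lam2) :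
    ∃ H : Set (A × B → lam3.ord.ToType),
      (∀ f ∈ H, ∀ g ∈ H, f ≠ g → {p | f p = g p} ∈ fubiniProd I J) ∧
      #H = lam0 := by
  have hmk : #(lam1.ord.ToType) ≤ #G := by
    rw [hGcard, Cardinal.mk_ord_toType]; exact h12
  obtain ⟨ι⟩ := Cardinal.le_def _ _ |>.mp hmk
  set Φ : (A → lam1.ord.ToType) → (A × B → lam3.ord.ToType) :=
    fun f p => (ι (f p.1) : B → lam3.ord.ToType) p.2 with hΦ
  have hΦinj : Function.Injective Φ := by
    intro f g h
    funext a
    by_contra hne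
    have h2 : (ι (f a) : B → lam3.ord.ToType) ≠ (ι (g a) : B → lam3.ord.ToType) :=
      fun he => hne (ι.injective (Subtype.ext he))
    obtain ⟨b, hb⟩ := Function.ne_iff.mp h2
    exact hb (congrFun h (a, b))
  refine ⟨Φ '' F, ?_, ?_⟩
  · rintro _ ⟨f, hf, rfl⟩ _ ⟨g, hg, rfl⟩ hne
    have hfg : f ≠ g := fun he => hne (by rw [he])
    have hsub : {a : A | {b : B | Φ f (a, b) = Φ g (a, b)} ∉ J} ⊆ {a | f a = g a} := by
      intro a ha
      by_contra hne2
      apply ha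
      have h1 : (ι (f a) : B → lam3.ord.ToType) ≠ (ι (g a) : B → lam3.ord.ToType) :=
        fun he => hne2 (ι.injective (Subtype.ext he))
      exact hGad _ (ι (f a)).2 _ (ι (g a)).2 h1
    exact hI.1 _ _ hsub (hFad f hf g hg hfg)
  · rw [Cardinal.mk_image_eq_of_injOn _ _ hΦinj.injOn, hFcard]
end

section
/- Let μ be a singular cardinal with cofinality κ. Then 𝔰_μ ≤ cf([μ]^κ, ⊆). -/
universe u

open Cardinal

namespace SplitAux

open Set Ordinal


/-- Two disjoint classes (b = 0, 1) of regular cardinals above `κ`, cofinal in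
any limit-indexed aleph. -/
def RegClass (κ : Cardinal.{u}) (b : ℕ) : Set Cardinal.{u} :=
  {c | κ < c ∧ ∃ (q : Ordinal.{u}) (n : ℕ),
    c = Cardinal.aleph (ω * q + ((2 * n + 1 + b : ℕ) : Ordinal))}

theorem regClass_isRegular {κ : Cardinal.{u}} {b : ℕ} {c : Cardinal.{u}}
    (hc : c ∈ RegClass κ b) : c.IsRegular := by
  obtain ⟨-, q, n, rfl⟩ := hc
  have hnat : 2 * n + 1 + b = (2 * n + b) + 1 := by omega
  have h : ((2 * n + 1 + b : ℕ) : Ordinal) = ((2 * n + b : ℕ) : Ordinal) + 1 := by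
    rw [hnat, Nat.cast_succ]
  rw [h, ← add_assoc, add_one_eq_succ, aleph_succ]
  exact isRegular_succ (aleph0_le_aleph _)

theorem regClass_gt {κ : Cardinal.{u}} {b : ℕ} {c : Cardinal.{u}}
    (hc : c ∈ RegClass κ b) : κ < c := hc.1

private theorem aleph_inj {o₁ o₂ : Ordinal.{u}} (h : Cardinal.aleph o₁ = Cardinal.aleph o₂) :
    o₁ = o₂ :=
  le_antisymm (aleph_le_aleph.1 h.le) (aleph_le_aleph.1 h.ge)

private theorem omega_mul_add_div (q : Ordinal.{u}) (k : ℕ) :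
    (ω * q + (k : Ordinal)) / ω = q := by
  rw [mul_add_div _ omega0_ne_zero, div_eq_zero_of_lt (nat_lt_omega0 k), add_zero]

theorem regClass_disjoint (κ : Cardinal.{u}) {c : Cardinal.{u}}
    (h0 : c ∈ RegClass κ 0) (h1 : c ∈ RegClass κ 1) : False := by
  obtain ⟨-, q, n, rfl⟩ := h0
  obtain ⟨-, q', m, heq⟩ := h1
  have h := aleph_inj heq
  have hq : q = q' := by
    rw [← omega_mul_add_div q (2 * n + 1 + 0), ← omega_mul_add_div q' (2 * m + 1 + 1), h]
  subst hq
  have h2 : ((2 * n + 1 + 0 : ℕ) : Ordinal) = ((2 * m + 1 + 1 : ℕ) : Ordinal) :=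
    add_left_cancel h
  have h3 : 2 * n + 1 + 0 = 2 * m + 1 + 1 := by exact_mod_cast h2
  omega

theorem regClass_pick {κ : Cardinal.{u}} (b : ℕ) {I : Ordinal.{u}} (hI : Order.IsSuccLimit I)
    {ν : Cardinal.{u}} (hν : ν < Cardinal.aleph I) (hκ : κ < Cardinal.aleph I) :
    ∃ c ∈ RegClass κ b, ν < c ∧ c < Cardinal.aleph I := by
  set c₀ := ν ⊔ κ ⊔ ℵ₀ with hc₀
  have hc₀μ : c₀ < Cardinal.aleph I := by
    rw [hc₀, sup_lt_iff, sup_lt_iff]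
    refine ⟨⟨hν, hκ⟩, ?_⟩
    rw [← aleph_zero]
    exact aleph_lt_aleph.2 hI.pos
  have hc₀ℵ : ℵ₀ ≤ c₀ := le_sup_right
  obtain ⟨i, hi'⟩ := Cardinal.mem_range_aleph_iff.2 hc₀ℵ
  have hi : c₀ = Cardinal.aleph i := hi'.symm
  have hiI : i < I := aleph_lt_aleph.1 (hi ▸ hc₀μ)
  obtain ⟨k, hk⟩ := lt_omega0.1 (mod_lt i omega0_ne_zero)
  have hdecomp : ω * (i / ω) + (k : Ordinal) = i := by rw [← hk]; exact div_add_mod i ω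
  set j := ω * (i / ω) + ((2 * k + 1 + b : ℕ) : Ordinal) with hj
  have hij : i < j := by
    rw [← hdecomp, hj]
    have : (k : Ordinal) < ((2 * k + 1 + b : ℕ) : Ordinal) := by
      exact_mod_cast (by omega : k < 2 * k + 1 + b)
    exact (add_lt_add_iff_left _).2 this
  have hjI : j < I := by
    have base : ω * (i / ω) ≤ i := by
      conv_rhs => rw [← hdecomp]
      exact le_add_right le_rfl
    have key : ∀ m : ℕ, ω * (i / ω) + (m : Ordinal) < I := by
      intro m
      induction m with
      | zero => simpa using lt_of_le_of_lt base hiI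
      | succ p ih =>
        have hcast : ((p + 1 : ℕ) : Ordinal) = ((p : ℕ) : Ordinal) + 1 := by push_cast; ring
        rw [hcast, ← add_assoc, add_one_eq_succ]
        exact hI.succ_lt ih
    exact key _
  have hle : κ ≤ c₀ := le_sup_of_le_left le_sup_right
  have hcj : Cardinal.aleph i < Cardinal.aleph j := aleph_lt_aleph.2 hij
  refine ⟨Cardinal.aleph j, ⟨?_, i / ω, k, rfl⟩, ?_, aleph_lt_aleph.2 hjI⟩
  · exact lt_of_le_of_lt (hle.trans hi.le) hcj
  · exact lt_of_le_of_lt ((le_sup_of_le_left le_sup_left).trans hi.le) hcj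


variable {α : Type u} [LinearOrder α] [IsWellOrder α ((· < ·) : α → α → Prop)]


variable {α : Type u} [LinearOrder α] [IsWellOrder α ((· < ·) : α → α → Prop)]

theorem Iic_small {B : Set α} {χ : Cardinal.{u}} (hχ : ℵ₀ ≤ χ) {δ x : α}
    (hδ2 : ∀ y, y < δ → #(B ∩ Iio y : Set α) < χ) (hx : x < δ) :
    #(B ∩ Iic x : Set α) < χ := by
  have hsub : (B ∩ Iic x : Set α) ⊆ (B ∩ Iio x) ∪ {x} := by
    rintro w ⟨hwB, hwx⟩
    rcases lt_or_eq_of_le hwx with h' | h'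
    · exact Or.inl ⟨hwB, h'⟩
    · exact Or.inr h'
  calc #(B ∩ Iic x : Set α) ≤ #((B ∩ Iio x : Set α) ∪ {x} : Set α) := mk_le_mk_of_subset hsub
    _ ≤ #(B ∩ Iio x : Set α) + #({x} : Set α) := mk_union_le _ _
    _ < χ := by
        rw [mk_singleton]
        exact add_lt_of_lt hχ (hδ2 x hx) (one_lt_aleph0.trans_le hχ)

theorem tail_large {B : Set α} {χ : Cardinal.{u}} (hχ : ℵ₀ ≤ χ) {δ x : α}
    (hδ1 : χ ≤ #(B ∩ Iio δ : Set α))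
    (hδ2 : ∀ y, y < δ → #(B ∩ Iio y : Set α) < χ) (hxδ : x < δ) :
    χ ≤ #(B ∩ Ioo x δ : Set α) := by
  by_contra h
  push_neg at h
  have hsub : (B ∩ Iio δ : Set α) ⊆ (B ∩ Iic x) ∪ (B ∩ Ioo x δ) := by
    rintro w ⟨hwB, hwδ⟩
    rcases le_or_gt w x with h' | h'
    · exact Or.inl ⟨hwB, h'⟩
    · exact Or.inr ⟨hwB, h', hwδ⟩
  have hle := (mk_le_mk_of_subset hsub).trans (mk_union_le _ _)
  exact ((hδ1.trans hle).trans_lt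
    (add_lt_of_lt hχ (Iic_small hχ hδ2 hxδ) h)).false

theorem marks_bounded {B : Set α} {χ : Cardinal.{u}} (hχ : χ.IsRegular) {δ : α}
    (hδ1 : χ ≤ #(B ∩ Iio δ : Set α))
    (hδ2 : ∀ y, y < δ → #(B ∩ Iio y : Set α) < χ)
    {e : Set α} (he : #e < χ) :
    ∃ b, b < δ ∧ ∀ x ∈ e, x < δ → x ≤ b := by
  by_contra h
  push_neg at h
  have hcov : (B ∩ Iio δ : Set α) ⊆ ⋃ x : ↥(e ∩ Iio δ), (B ∩ Iic (x : α)) := by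
    rintro w ⟨hwB, hwδ⟩
    obtain ⟨x, hxe, hxδ, hwx⟩ := h w hwδ
    exact mem_iUnion.2 ⟨⟨x, hxe, hxδ⟩, ⟨hwB, hwx.le⟩⟩
  have hbig := (hδ1.trans (mk_le_mk_of_subset hcov)).trans mk_iUnion_le_sum_mk
  have hlt : (Cardinal.sum fun x : ↥(e ∩ Iio δ) => #(B ∩ Iic (x : α) : Set α)) < χ := by
    refine sum_lt_of_isRegular hχ
      ((mk_le_mk_of_subset inter_subset_left).trans_lt he) fun x => ?_
    exact Iic_small hχ.1 hδ2 x.2.2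
  exact (hbig.trans_lt hlt).false

theorem mark_card_le {B : Set α} {χ : Cardinal.{u}} {δ : α}
    (hδ2 : ∀ y, y < δ → #(B ∩ Iio y : Set α) < χ) :
    #(B ∩ Iio δ : Set α) ≤ χ := by
  have hle : type (Subrel ((· < ·) : α → α → Prop) (· ∈ (B ∩ Iio δ : Set α))) ≤ χ.ord := by
    by_contra hcon
    push_neg at hcon
    obtain ⟨w, hw⟩ := typein_surj (Subrel ((· < ·) : α → α → Prop) (· ∈ (B ∩ Iio δ : Set α))) hcon
    have hcard : #{y // Subrel ((· < ·) : α → α → Prop) (· ∈ (B ∩ Iio δ : Set α)) y w} = χ := by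
      rw [← card_typein, hw, card_ord]
    have hinj : Function.Injective
        (fun y : {y // Subrel ((· < ·) : α → α → Prop) (· ∈ (B ∩ Iio δ : Set α)) y w} =>
          (⟨(y : ↥(B ∩ Iio δ)), (y : ↥(B ∩ Iio δ)).2.1, y.2⟩ : ↥(B ∩ Iio (w : α)))) := by
      intro y₁ y₂ hy
      have h8 := congrArg (Subtype.val : ↥(B ∩ Iio (w : α)) → α) hy
      exact Subtype.ext (Subtype.ext h8)
    have := (hcard ▸ Cardinal.mk_le_of_injective hinj)
    exact (this.trans_lt (hδ2 _ (w : ↥(B ∩ Iio δ)).2.2)).false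
  calc #(B ∩ Iio δ : Set α)
      = (type (Subrel ((· < ·) : α → α → Prop) (· ∈ (B ∩ Iio δ : Set α)))).card := (card_type _).symm
    _ ≤ χ.ord.card := Ordinal.card_le_card hle
    _ = χ := card_ord χ

theorem mark_cof {B : Set α} {χ : Cardinal.{u}} (hχ : χ.IsRegular) {δ : α}
    (hδ1 : χ ≤ #(B ∩ Iio δ : Set α))
    (hδ2 : ∀ y, y < δ → #(B ∩ Iio y : Set α) < χ) :
    (typein ((· < ·) : α → α → Prop) δ).cof = χ := by
  have hub : ∀ x, x < δ → ∃ w, w ∈ B ∧ x < w ∧ w < δ := by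
    intro x hx
    have h1 := tail_large hχ.1 hδ1 hδ2 hx
    have h2 : (0 : Cardinal) < #(B ∩ Ioo x δ : Set α) :=
      lt_of_lt_of_le (aleph0_pos.trans_le hχ.1) h1
    obtain ⟨w, hw⟩ := nonempty_coe_sort.1 (Cardinal.mk_ne_zero_iff.1 h2.ne')
    exact ⟨w, hw.1, hw.2.1, hw.2.2⟩
  have hlsub : lsub.{u, u} (fun w : ↥(B ∩ Iio δ) => typein ((· < ·) : α → α → Prop) (w : α)) =
      typein ((· < ·) : α → α → Prop) δ := by
    apply le_antisymm
    · exact lsub_le fun w => (typein_lt_typein _).2 w.2.2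
    · rw [← not_lt]
      intro hcon
      have hlt : lsub.{u, u} (fun w : ↥(B ∩ Iio δ) => typein ((· < ·) : α → α → Prop) (w : α)) <
          type ((· < ·) : α → α → Prop) := hcon.trans (typein_lt_type _ δ)
      have hxδ : enum ((· < ·) : α → α → Prop) ⟨_, hlt⟩ < δ := by
        have h3 := typein_enum ((· < ·) : α → α → Prop) hlt
        exact (typein_lt_typein ((· < ·) : α → α → Prop)).1 (by rw [h3]; exact hcon)
      obtain ⟨w, hwB, hxw, hwδ⟩ := hub _ hxδ
      have h1 : lsub.{u, u} (fun w : ↥(B ∩ Iio δ) => typein ((· < ·) : α → α → Prop) (w : α)) <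
          typein ((· < ·) : α → α → Prop) w := by
        have h4 := (typein_lt_typein ((· < ·) : α → α → Prop)).2 hxw
        rwa [typein_enum] at h4
      exact (h1.trans
        (lt_lsub (fun w : ↥(B ∩ Iio δ) => typein ((· < ·) : α → α → Prop) (w : α))
          ⟨w, hwB, hwδ⟩)).false
  have hcle : (typein ((· < ·) : α → α → Prop) δ).cof ≤ χ := by
    rw [← hlsub]
    exact (cof_lsub_le _).trans (mark_card_le hδ2)
  have hcge : χ ≤ (typein ((· < ·) : α → α → Prop) δ).cof := by
    by_contra hcon
    push_neg at hcon
    obtain ⟨ι, f, hf, hι⟩ := exists_lsub_cof (typein ((· < ·) : α → α → Prop) δ)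
    have hfi : ∀ i, f i < type ((· < ·) : α → α → Prop) := fun i =>
      ((hf ▸ lt_lsub f i) : f i < typein ((· < ·) : α → α → Prop) δ).trans (typein_lt_type _ δ)
    have hgi : ∀ i, typein ((· < ·) : α → α → Prop)
        (enum ((· < ·) : α → α → Prop) ⟨f i, hfi i⟩) = f i := fun i => typein_enum _ _
    have hgδ : ∀ i, enum ((· < ·) : α → α → Prop) ⟨f i, hfi i⟩ < δ := by
      intro i
      have h5 : f i < typein ((· < ·) : α → α → Prop) δ := hf ▸ lt_lsub f i
      exact (typein_lt_typein ((· < ·) : α → α → Prop)).1 (by rw [hgi]; exact h5)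
    have hcov : (B ∩ Iio δ : Set α) ⊆
        ⋃ i, (B ∩ Iic (enum ((· < ·) : α → α → Prop) ⟨f i, hfi i⟩)) := by
      rintro w ⟨hwB, hwδ⟩
      have h6 : typein ((· < ·) : α → α → Prop) w < lsub.{u, u} f := by
        rw [hf]; exact (typein_lt_typein _).2 hwδ
      obtain ⟨i, hi⟩ := lt_lsub_iff.1 h6
      refine mem_iUnion.2 ⟨i, hwB, ?_⟩
      have h7 : typein ((· < ·) : α → α → Prop) w ≤
          typein ((· < ·) : α → α → Prop) (enum ((· < ·) : α → α → Prop) ⟨f i, hfi i⟩) := by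
        rw [hgi]; exact hi
      exact not_lt.1 ((typein_le_typein _).1 h7)
    have hbig := (hδ1.trans (mk_le_mk_of_subset hcov)).trans mk_iUnion_le_sum_mk
    have hlt : (Cardinal.sum fun i =>
        #(B ∩ Iic (enum ((· < ·) : α → α → Prop) ⟨f i, hfi i⟩) : Set α)) < χ :=
      sum_lt_of_isRegular hχ (hι ▸ hcon) fun i => Iic_small hχ.1 hδ2 (hgδ i)
    exact (hbig.trans_lt hlt).false
  exact le_antisymm hcle hcge


open Classical in
/-- The least element of `e` strictly above `t` (or `t` itself if none exists). -/
noncomputable def nxt (e : Set α) (t : α) : α :=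
  if h : {s' | s' ∈ e ∧ t < s'}.Nonempty then
    (IsWellFounded.wf : WellFounded ((· < ·) : α → α → Prop)).min {s' | s' ∈ e ∧ t < s'} h
  else t

theorem nxt_eq {e : Set α} {t δ b : α} (hδe : δ ∈ e) (htδ : t < δ)
    (hb : ∀ x ∈ e, x < δ → x ≤ b) (hbt : b < t) : nxt e t = δ := by
  have hne : {s' | s' ∈ e ∧ t < s'}.Nonempty := ⟨δ, hδe, htδ⟩
  have hm := (IsWellFounded.wf : WellFounded ((· < ·) : α → α → Prop)).min_mem
    {s' | s' ∈ e ∧ t < s'} hne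
  have h1 : ¬δ < (IsWellFounded.wf : WellFounded ((· < ·) : α → α → Prop)).min
      {s' | s' ∈ e ∧ t < s'} hne :=
    (IsWellFounded.wf : WellFounded ((· < ·) : α → α → Prop)).not_lt_min _ (show δ ∈ {s' | s' ∈ e ∧ t < s'} from ⟨hδe, htδ⟩)
  have h2 : ¬(IsWellFounded.wf : WellFounded ((· < ·) : α → α → Prop)).min
      {s' | s' ∈ e ∧ t < s'} hne < δ := by
    intro hlt
    exact absurd (hb _ hm.1 hlt) (not_le.2 (hbt.trans hm.2))
  have heq : (IsWellFounded.wf : WellFounded ((· < ·) : α → α → Prop)).min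
      {s' | s' ∈ e ∧ t < s'} hne = δ :=
    le_antisymm (not_lt.1 h1) (not_lt.1 h2)
  rw [nxt, dif_pos hne, heq]

/-- The candidate splitting set attached to `e`. -/
noncomputable def AOf (κ : Cardinal.{u}) (e : Set α) : Set α :=
  {t | (typein ((· < ·) : α → α → Prop) (nxt e t)).cof ∈ RegClass κ 0}

theorem exists_tail {B : Set α} {χ : Cardinal.{u}} (hχ : χ.IsRegular) {δ : α}
    (hδ1 : χ ≤ #(B ∩ Iio δ : Set α))
    (hδ2 : ∀ y, y < δ → #(B ∩ Iio y : Set α) < χ)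
    {e : Set α} (he : #e < χ) (hδe : δ ∈ e) :
    ∃ W : Set α, W ⊆ B ∧ χ ≤ #W ∧ ∀ t ∈ W, nxt e t = δ := by
  obtain ⟨b, hbδ, hb⟩ := marks_bounded hχ hδ1 hδ2 he
  refine ⟨B ∩ Ioo b δ, inter_subset_left, tail_large hχ.1 hδ1 hδ2 hbδ, ?_⟩
  intro t ht
  exact nxt_eq hδe ht.2.2 hb ht.2.1

theorem main (μ κ : Cardinal.{u}) (hTcard : #α = μ)
    (htype : type ((· < ·) : α → α → Prop) = μ.ord)
    (hμ : ℵ₀ ≤ μ) (hsing : μ.ord.cof < μ) (hκ : μ.ord.cof = κ)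
    (C : Set (Set α)) (hXcard : ∀ x ∈ C, #x = κ)
    (hcov : ∀ y : Set α, #y = κ → ∃ x ∈ C, y ⊆ x) :
    ∃ S : Set (Set α), (∀ A ∈ S, #A = μ) ∧
      (∀ B : Set α, #B = μ → ∃ A ∈ S, #(B ∩ A : Set α) = μ ∧ #(B \ A : Set α) = μ) ∧
      Cardinal.mk S ≤ #C := by
  classical
  have hμord : Order.IsSuccLimit μ.ord := Cardinal.isSuccLimit_ord hμ
  have hκinf : ℵ₀ ≤ κ := by rw [← hκ]; exact aleph0_le_cof.2 hμord
  have hκμ : κ < μ := hκ ▸ hsing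
  have hℵμ : ℵ₀ < μ := hκinf.trans_lt hκμ
  obtain ⟨I, hI'⟩ := Cardinal.mem_range_aleph_iff.2 hμ
  have hI : μ = Cardinal.aleph I := hI'.symm
  have hIlim : Order.IsSuccLimit I := by
    rcases Ordinal.zero_or_succ_or_isSuccLimit I with h0 | ⟨p, hp⟩ | hlim
    · exfalso
      rw [h0, aleph_zero] at hI
      exact hℵμ.ne' hI
    · exfalso
      have hreg : μ.IsRegular := by
        rw [hI, ← hp, aleph_succ]
        exact isRegular_succ (aleph0_le_aleph _)
      exact (hreg.2.trans_lt hsing).false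
    · exact hlim
  have hlimtype : Order.IsSuccLimit (type ((· < ·) : α → α → Prop)) := htype ▸ hμord
  have hmax : ∀ t : α, ∃ t', t < t' := by
    intro t
    have h1 : typein ((· < ·) : α → α → Prop) t < type ((· < ·) : α → α → Prop) :=
      typein_lt_type _ t
    have h2 : typein ((· < ·) : α → α → Prop) t + 1 < type ((· < ·) : α → α → Prop) := by
      rw [add_one_eq_succ]; exact hlimtype.succ_lt h1
    refine ⟨enum ((· < ·) : α → α → Prop) ⟨typein ((· < ·) : α → α → Prop) t + 1, h2⟩, ?_⟩
    have h3 : typein ((· < ·) : α → α → Prop) t <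
        typein ((· < ·) : α → α → Prop) (enum ((· < ·) : α → α → Prop) ⟨typein ((· < ·) : α → α → Prop) t + 1, h2⟩) := by
      rw [typein_enum, add_one_eq_succ]
      exact Order.lt_succ _
    exact (typein_lt_typein ((· < ·) : α → α → Prop)).1 h3
  have hIio_card : ∀ t : α, #(Iio t : Set α) = (typein ((· < ·) : α → α → Prop) t).card := by
    intro t
    rw [card_typein]
    exact mk_congr (Equiv.subtypeEquivRight fun y => Iff.rfl)
  have hIio_lt : ∀ t : α, #(Iio t : Set α) < μ := by
    intro t
    rw [hIio_card]
    exact Cardinal.lt_ord.1 (htype ▸ typein_lt_type ((· < ·) : α → α → Prop) t)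
  have hIio_ge : ∀ ν : Cardinal.{u}, ν < μ → ∃ t : α, ν ≤ #(Iio t : Set α) := by
    intro ν hν
    have h1 : ν.ord < type ((· < ·) : α → α → Prop) := htype ▸ ord_lt_ord.2 hν
    refine ⟨enum ((· < ·) : α → α → Prop) ⟨ν.ord, h1⟩, ?_⟩
    rw [hIio_card, typein_enum, card_ord]
  obtain ⟨Sc, hScunb, hSccard⟩ := Order.exists_cof_eq α
  replace hScunb : ∀ w : α, ∃ s ∈ Sc, ¬ s < w := fun w =>
    (hScunb w).imp fun s h => ⟨h.1, not_lt.2 h.2⟩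
  rw [← cof_type, htype, hκ] at hSccard
  have hScne : Nonempty ↥Sc := by
    rw [← mk_ne_zero_iff, hSccard]
    exact (aleph0_pos.trans_le hκinf).ne'
  set S : Set (Set α) := {A | ∃ e ∈ C, A = AOf κ e ∧ #A = μ} with hS
  refine ⟨S, ?_, ?_, ?_⟩
  · rintro A ⟨e, -, -, hcard⟩
    exact hcard
  · intro B hBcard
    have massex : ∀ χ : Cardinal.{u}, χ.IsRegular → χ < μ →
        ∃ t : α, χ ≤ #(B ∩ Iio t : Set α) := by
      intro χ hχr hχμ
      by_contra hcon
      push_neg at hcon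
      have hcov' : B ⊆ ⋃ s : ↥Sc, (B ∩ Iic (s : α)) := by
        intro w hw
        obtain ⟨s, hs, hns⟩ := hScunb w
        exact mem_iUnion.2 ⟨⟨s, hs⟩, hw, not_lt.1 hns⟩
      have h1 : μ ≤ Cardinal.sum fun s : ↥Sc => #(B ∩ Iic (s : α) : Set α) :=
        hBcard ▸ (mk_le_mk_of_subset hcov').trans mk_iUnion_le_sum_mk
      have h2 : (Cardinal.sum fun s : ↥Sc => #(B ∩ Iic (s : α) : Set α)) ≤ κ * χ := by
        refine (sum_le_mk_mul_iSup _).trans (mul_le_mul' hSccard.le (ciSup_le' fun s => ?_))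
        obtain ⟨t', ht'⟩ := hmax (s : α)
        have hsub : (B ∩ Iic (s : α) : Set α) ⊆ B ∩ Iio t' := fun w hw =>
          ⟨hw.1, lt_of_le_of_lt hw.2 ht'⟩
        exact (mk_le_mk_of_subset hsub).trans (hcon t').le
      exact absurd (h1.trans h2) (not_le.2 (mul_lt_of_lt hμ hκμ hχμ))
    have mainpick : ∀ b : ℕ, ∀ s : ↥Sc, ∃ χ : Cardinal.{u}, ∃ δ : α,
        χ ∈ RegClass κ b ∧ χ.IsRegular ∧ #(Iio (s : α) : Set α) < χ ∧
        χ ≤ #(B ∩ Iio δ : Set α) ∧ ∀ x, x < δ → #(B ∩ Iio x : Set α) < χ := by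
      intro b s
      obtain ⟨χ, hχcls, hχν, hχμ⟩ := regClass_pick (κ := κ) b hIlim
        (hI ▸ hIio_lt (s : α)) (hI ▸ hκμ)
      have hreg := regClass_isRegular hχcls
      obtain ⟨t₀, ht₀⟩ := massex χ hreg (hI ▸ hχμ)
      have hUne : {t : α | χ ≤ #(B ∩ Iio t : Set α)}.Nonempty := ⟨t₀, ht₀⟩
      refine ⟨χ, (IsWellFounded.wf : WellFounded ((· < ·) : α → α → Prop)).min _ hUne,
        hχcls, hreg, hχν,
        (IsWellFounded.wf : WellFounded ((· < ·) : α → α → Prop)).min_mem _ hUne, ?_⟩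
      intro x hx
      by_contra hcon
      push_neg at hcon
      exact (IsWellFounded.wf : WellFounded ((· < ·) : α → α → Prop)).not_lt_min _ hcon hx
    choose χf δf hcls hregf hνf hma hmb using mainpick
    set Y : Set α := (range fun s : ↥Sc => δf 0 s) ∪ (range fun s : ↥Sc => δf 1 s) with hY
    have hYcard : #Y ≤ κ := by
      refine (mk_union_le _ _).trans ?_
      have h1 : #(range fun s : ↥Sc => δf 0 s) ≤ κ := mk_range_le.trans_eq hSccard
      have h2 : #(range fun s : ↥Sc => δf 1 s) ≤ κ := mk_range_le.trans_eq hSccard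
      calc #(range fun s : ↥Sc => δf 0 s) + #(range fun s : ↥Sc => δf 1 s)
          ≤ κ + κ := add_le_add h1 h2
        _ = κ := add_eq_self hκinf
    obtain ⟨Z, hZcard⟩ := le_mk_iff_exists_set.1 (hTcard ▸ hκμ.le : κ ≤ #α)
    have hY'card : #(Y ∪ Z : Set α) = κ := by
      apply le_antisymm
      · refine (mk_union_le _ _).trans ?_
        rw [hZcard]
        calc #Y + κ ≤ κ + κ := add_le_add hYcard le_rfl
          _ = κ := add_eq_self hκinf
      · rw [← hZcard]
        exact mk_le_mk_of_subset subset_union_right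
    obtain ⟨e, heC, hYe⟩ := hcov (Y ∪ Z) hY'card
    have hecard : #e = κ := hXcard e heC
    have hmem0 : ∀ s : ↥Sc, δf 0 s ∈ e := fun s =>
      hYe (mem_union_left _ (mem_union_left _ ⟨s, rfl⟩))
    have hmem1 : ∀ s : ↥Sc, δf 1 s ∈ e := fun s =>
      hYe (mem_union_left _ (mem_union_right _ ⟨s, rfl⟩))
    have hbig : ∀ (b : ℕ) (P : Set α), (∀ s : ↥Sc, δf b s ∈ e) →
        (∀ (s : ↥Sc) (W : Set α), W ⊆ B → χf b s ≤ #W →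
          (∀ t ∈ W, (typein ((· < ·) : α → α → Prop) (nxt e t)).cof = χf b s) → W ⊆ P) →
        μ ≤ #P := by
      intro b P hmem hP
      by_contra hcon
      push_neg at hcon
      obtain ⟨t₀, ht₀⟩ := hIio_ge (#P) hcon
      obtain ⟨s₀, hs₀, hns₀⟩ := hScunb t₀
      set s : ↥Sc := ⟨s₀, hs₀⟩ with hs'
      have hν : #(P : Set α) < χf b s :=
        lt_of_le_of_lt (ht₀.trans (mk_le_mk_of_subset (Iio_subset_Iio (not_lt.1 hns₀))))
          (hνf b s)
      have hee : #e < χf b s := hecard ▸ regClass_gt (hcls b s)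
      obtain ⟨W, hWB, hWcard, hWnxt⟩ :=
        exists_tail (hregf b s) (hma b s) (hmb b s) hee (hmem s)
      have hWcof : ∀ t ∈ W, (typein ((· < ·) : α → α → Prop) (nxt e t)).cof = χf b s := by
        intro t ht
        rw [hWnxt t ht]
        exact mark_cof (hregf b s) (hma b s) (hmb b s)
      have hsub := hP s W hWB hWcard hWcof
      exact absurd (hWcard.trans (mk_le_mk_of_subset hsub)) (not_le.2 hν)
    have hBA : #(B ∩ AOf κ e : Set α) = μ := by
      refine le_antisymm (hBcard ▸ mk_le_mk_of_subset inter_subset_left) ?_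
      refine hbig 0 _ hmem0 ?_
      intro s W hWB hWcard hWcof t ht
      refine ⟨hWB ht, ?_⟩
      show (typein ((· < ·) : α → α → Prop) (nxt e t)).cof ∈ RegClass κ 0
      rw [hWcof t ht]
      exact hcls 0 s
    have hBD : #(B \ AOf κ e : Set α) = μ := by
      refine le_antisymm (hBcard ▸ mk_le_mk_of_subset diff_subset) ?_
      refine hbig 1 _ hmem1 ?_
      intro s W hWB hWcard hWcof t ht
      refine ⟨hWB ht, ?_⟩
      intro hA
      have hA' : (typein ((· < ·) : α → α → Prop) (nxt e t)).cof ∈ RegClass κ 0 := hA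
      rw [hWcof t ht] at hA'
      exact regClass_disjoint κ hA' (hcls 1 s)
    have hAcard : #(AOf κ e : Set α) = μ :=
      le_antisymm (hTcard ▸ mk_set_le _) (hBA ▸ mk_le_mk_of_subset inter_subset_right)
    exact ⟨AOf κ e, ⟨e, heC, rfl, hAcard⟩, hBA, hBD⟩
  · have hsub : S ⊆ (fun e => AOf κ e) '' C := by
      rintro A ⟨e, heC, hAe, -⟩
      exact ⟨e, heC, hAe.symm⟩
    exact (mk_le_mk_of_subset hsub).trans mk_image_le

end SplitAux


/-- `S` is a splitting family on `μ`: every member of `S` has cardinality `μ`,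
and every `B ⊆ μ` of cardinality `μ` is split by some `A ∈ S`, that is,
`|B ∩ A| = |B \ A| = μ`. -/
def IsSplittingFamily (μ : Cardinal.{u}) (S : Set (Set μ.ord.ToType)) : Prop :=
  (∀ A ∈ S, #A = μ) ∧
  ∀ B : Set μ.ord.ToType, #B = μ → ∃ A ∈ S, #(B ∩ A : Set μ.ord.ToType) = μ ∧
    #(B \ A : Set μ.ord.ToType) = μ

/-- `𝔰_μ`: the least cardinality of a splitting family on `μ`. -/
noncomputable def splitNumber (μ : Cardinal.{u}) : Cardinal.{u} :=
  sInf {c | ∃ S : Set (Set μ.ord.ToType), IsSplittingFamily μ S ∧ #S = c}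

/-- `cf([T]^κ, ⊆)`: the least cardinality of a cofinal subset of
`([T]^κ, ⊆)`, that is, of a set `C` of subsets of `T` of cardinality `κ` such
that every subset of `T` of cardinality `κ` is contained in some member of
`C`. -/
noncomputable def cofSC (T : Type u) (κ : Cardinal.{u}) : Cardinal.{u} :=
  sInf {c | ∃ C : Set (Set T),
    ((∀ x ∈ C, #x = κ) ∧ ∀ y : Set T, #y = κ → ∃ x ∈ C, y ⊆ x) ∧ #C = c}

/-- Let `μ` be a singular cardinal of cofinality `κ`.
Then `𝔰_μ ≤ cf([μ]^κ, ⊆)`. -/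
theorem splitNumber_le_cofSC (μ κ : Cardinal.{u})
    (hμ : ℵ₀ ≤ μ) (hsing : μ.ord.cof < μ) (hκ : μ.ord.cof = κ) :
    splitNumber μ ≤ cofSC μ.ord.ToType κ := by
  classical
  have hne : {c | ∃ C : Set (Set μ.ord.ToType),
      ((∀ x ∈ C, #x = κ) ∧ ∀ y : Set μ.ord.ToType, #y = κ → ∃ x ∈ C, y ⊆ x) ∧ #C = c}.Nonempty :=
    ⟨#{x : Set μ.ord.ToType | #x = κ}, {x | #x = κ},
      ⟨fun x hx => hx, fun y hy => ⟨y, hy, subset_rfl⟩⟩, rfl⟩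
  obtain ⟨C, ⟨hXcard, hcov⟩, hCval⟩ := csInf_mem hne
  haveI : IsWellOrder μ.ord.ToType ((· < ·) : μ.ord.ToType → μ.ord.ToType → Prop) :=
    isWellOrder_lt
  obtain ⟨S, hS1, hS2, hS3⟩ := SplitAux.main (α := μ.ord.ToType) μ κ
    (by rw [Cardinal.mk_toType, card_ord]) (Ordinal.type_toType _) hμ hsing hκ C hXcard hcov
  have h1 : splitNumber μ ≤ #S := csInf_le (OrderBot.bddBelow _) ⟨S, ⟨hS1, hS2⟩, rfl⟩
  exact h1.trans (hS3.trans_eq hCval)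
end

section
/- Let μ be a singular cardinal with cofinality κ. Then 𝔰_μ ≤ 𝔡_μ. -/
universe u

open Cardinal

namespace SplitDomAux

open Cardinal Set Ordinal

noncomputable def seqF (κ : Cardinal.{u}) (b : Ordinal.{u} → Ordinal.{u}) :
    Ordinal.{u} → Ordinal.{u} :=
  Ordinal.lt_wf.fix fun x ih =>
    ((Order.succ ((Ordinal.bsup.{u,u} x fun y hy => ih y hy).card + (b x).card + κ) : Cardinal).ord)

theorem seqF_def (κ : Cardinal.{u}) (b : Ordinal.{u} → Ordinal.{u}) (x : Ordinal.{u}) :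
    seqF κ b x =
      ((Order.succ ((Ordinal.bsup.{u,u} x fun y _ => seqF κ b y).card + (b x).card + κ) :
        Cardinal).ord) := by
  unfold seqF
  rw [WellFounded.fix_eq]

theorem nu_exists {μ κ : Cardinal.{u}} (hμ : ℵ₀ ≤ μ) (hκμ : κ < μ) (hκreg : κ.IsRegular)
    (hcof : μ.ord.cof = κ) (hμlim : ∀ c < μ, Order.succ c < μ) :
    ∃ ν : κ.ord.ToType → Cardinal.{u},
      (∀ i, ν i < μ) ∧ (∀ i, κ < ν i) ∧ (∀ i, (ν i).IsRegular) ∧ StrictMono ν ∧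
      (∀ c < μ, ∃ i, c < ν i) ∧ Cardinal.sum ν = μ := by
  classical
  obtain ⟨ι, fseq, hlsub, hιcard⟩ := Ordinal.exists_lsub_cof μ.ord
  rw [hcof] at hιcard
  have hq : Nonempty (κ.ord.ToType ≃ ι) := by
    apply Cardinal.eq.mp
    rw [Cardinal.mk_toType, Cardinal.card_ord, hιcard]
  obtain ⟨qK⟩ := hq
  set b : Ordinal.{u} → Ordinal.{u} :=
    fun x => if hx : x < κ.ord then fseq (qK ((Ordinal.ToType.mk (o := κ.ord)) ⟨x, hx⟩)) else 0
    with hb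
  have hbμ : ∀ x, b x < μ.ord := by
    intro x
    rw [hb]
    dsimp only
    split
    · rw [← hlsub]; exact Ordinal.lt_lsub _ _
    · exact (Cardinal.isSuccLimit_ord hμ).pos
  set s : Ordinal.{u} → Ordinal.{u} := seqF κ b with hs
  -- s x < μ.ord for x < κ.ord
  have hsμ : ∀ x, x < κ.ord → s x < μ.ord := by
    intro x
    induction x using Ordinal.induction with
    | _ x IH =>
      intro hx
      rw [hs, seqF_def, ← hs]
      rw [Cardinal.lt_ord, Cardinal.card_ord]
      apply hμlim
      apply Cardinal.add_lt_of_lt hμ (Cardinal.add_lt_of_lt hμ _ _) hκμ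
      · rw [← Cardinal.lt_ord]
        apply Ordinal.bsup_lt_ord
        · rw [hcof]; exact Cardinal.lt_ord.mp hx
        · intro y hy; exact IH y hy (hy.trans hx)
      · rw [← Cardinal.lt_ord]
        exact hbμ x
  -- the sequence ν
  set tpn : κ.ord.ToType → Ordinal.{u} :=
    fun i => ((Ordinal.ToType.mk (o := κ.ord)).symm i : Set.Iio κ.ord).1 with htpn
  have htpn_lt : ∀ i, tpn i < κ.ord := fun i => ((Ordinal.ToType.mk (o := κ.ord)).symm i).2
  have htpn_smono : StrictMono tpn := by
    intro i i' h
    exact (Ordinal.ToType.mk (o := κ.ord)).symm.strictMono h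
  set ν : κ.ord.ToType → Cardinal.{u} := fun i => (s (tpn i)).card with hν
  have hνval : ∀ i, ν i =
      Order.succ ((Ordinal.bsup.{u,u} (tpn i) fun y _ => s y).card + (b (tpn i)).card + κ) := by
    intro i
    rw [hν]
    dsimp only
    rw [hs, seqF_def, Cardinal.card_ord]
  have hν_lt : ∀ i, ν i < μ := by
    intro i
    rw [hν]
    exact Cardinal.lt_ord.mp (hsμ _ (htpn_lt i))
  have hν_κ : ∀ i, κ < ν i := by
    intro i
    rw [hνval i]
    exact lt_of_le_of_lt le_add_self (Order.lt_succ _)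
  have hν_reg : ∀ i, (ν i).IsRegular := by
    intro i
    rw [hνval i]
    exact Cardinal.isRegular_succ (hκreg.aleph0_le.trans le_add_self)
  have hν_smono : StrictMono ν := by
    intro i i' h
    calc ν i ≤ (Ordinal.bsup.{u,u} (tpn i') fun y _ => s y).card := by
                rw [hν]; dsimp only
                exact Ordinal.card_le_card (Ordinal.le_bsup (fun y _ => s y) (tpn i) (htpn_smono h))
      _ < ν i' := by
          rw [hνval i']
          exact lt_of_le_of_lt (le_add_right (le_add_right le_rfl)) (Order.lt_succ _)
  have hν_cof : ∀ c < μ, ∃ i, c < ν i := by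
    intro c hc
    have : c.ord < Ordinal.lsub fseq := by rw [hlsub]; exact Cardinal.ord_lt_ord.mpr hc
    rw [Ordinal.lt_lsub_iff] at this
    obtain ⟨i, hi⟩ := this
    set i'' : κ.ord.ToType := qK.symm i with hi''
    have henum : (Ordinal.ToType.mk (o := κ.ord)) ⟨tpn i'', htpn_lt i''⟩ = i'' := by
      have : (⟨tpn i'', htpn_lt i''⟩ : Set.Iio κ.ord) = (Ordinal.ToType.mk (o := κ.ord)).symm i'' :=
        Subtype.ext rfl
      rw [this]
      exact OrderIso.apply_symm_apply _ _
    have hbt : b (tpn i'') = fseq i := by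
      rw [hb]
      dsimp only
      rw [dif_pos (htpn_lt i''), henum, hi'']
      simp
    refine ⟨i'', ?_⟩
    rw [hνval i'', hbt]
    have h1 : c ≤ (fseq i).card := by
      have := Ordinal.card_le_card hi
      rwa [Cardinal.card_ord] at this
    exact lt_of_le_of_lt (h1.trans (le_add_right le_add_self)) (Order.lt_succ _)
  have hsum : Cardinal.sum ν = μ := by
    apply le_antisymm
    · calc Cardinal.sum ν ≤ Cardinal.sum (fun _ : κ.ord.ToType => μ) :=
            Cardinal.sum_le_sum _ _ (fun i => (hν_lt i).le)
        _ = #κ.ord.ToType * μ := Cardinal.sum_const' _ _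
        _ = κ * μ := by rw [Cardinal.mk_toType, Cardinal.card_ord]
        _ = μ := by rw [Cardinal.mul_eq_max hκreg.aleph0_le hμ]; exact max_eq_right hκμ.le
    · by_contra h
      push_neg at h
      obtain ⟨i, hi⟩ := hν_cof _ h
      exact (Cardinal.le_sum ν i).not_gt hi
  exact ⟨ν, hν_lt, hν_κ, hν_reg, hν_smono, hν_cof, hsum⟩

theorem fiber_exists {μ : Cardinal.{u}} {K : Type u} (ν : K → Cardinal.{u})
    (hsum : Cardinal.sum ν = μ) :
    ∃ idx : μ.ord.ToType → K, ∀ i, #(idx ⁻¹' {i}) = ν i := by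
  have hmk : #(Σ i : K, (ν i).ord.ToType) = #μ.ord.ToType := by
    rw [Cardinal.mk_sigma, Cardinal.mk_toType, Cardinal.card_ord]
    simp only [Cardinal.mk_toType, Cardinal.card_ord]
    exact hsum
  obtain ⟨E⟩ := Cardinal.eq.mp hmk.symm
  refine ⟨fun α => (E α).1, fun i => ?_⟩
  have h1 : (fun α => (E α).1) ⁻¹' {i} = E ⁻¹' (Sigma.fst ⁻¹' {i}) := rfl
  rw [h1, Cardinal.mk_preimage_of_injective_of_subset_range _ _ E.injective
    (by rw [Equiv.range_eq_univ]; exact Set.subset_univ _)]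
  have h2 : (Sigma.fst ⁻¹' {i} : Set (Σ i : K, (ν i).ord.ToType)) = Set.range (Sigma.mk i) := by
    ext ⟨j, y⟩
    constructor
    · rintro (h : j = i)
      subst h
      exact ⟨y, rfl⟩
    · rintro ⟨y', h⟩
      cases h
      rfl
  rw [h2, Cardinal.mk_range_eq _ sigma_mk_injective, Cardinal.mk_toType, Cardinal.card_ord]

noncomputable def itF (F : Ordinal.{u} → Ordinal.{u}) : Ordinal.{u} → Ordinal.{u} :=
  Ordinal.lt_wf.fix fun x ih => F (Ordinal.bsup.{u,u} x fun y hy => ih y hy)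

theorem itF_def (F : Ordinal.{u} → Ordinal.{u}) (x : Ordinal.{u}) :
    itF F x = F (Ordinal.bsup.{u,u} x fun y _ => itF F y) := by
  unfold itF
  rw [WellFounded.fix_eq]

theorem not_evenO (q : Ordinal.{u}) : ¬ ∃ p, 2 * q + 1 = 2 * p := by
  rintro ⟨p, hp⟩
  rcases le_or_gt p q with h | h
  · have h2 : (2 : Ordinal) * p ≤ 2 * q := mul_le_mul_right h 2
    rw [← hp] at h2
    simp at h2
  · have h1 : (2 : Ordinal) * (q + 1) ≤ 2 * p := mul_le_mul_right (Order.succ_le_of_lt h) 2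
    rw [mul_add, mul_one, ← hp] at h1
    have h3 : (2 : Ordinal) * q + 1 < 2 * q + 2 := by
      apply add_lt_add_right
      exact one_lt_two
    exact absurd (h3.trans_le h1) (lt_irrefl _)

theorem key_aux {μ κ : Cardinal.{u}} (hμ : ℵ₀ ≤ μ) (hκμ : κ < μ) (hκreg : κ.IsRegular)
    (ν : κ.ord.ToType → Cardinal.{u}) (idx : μ.ord.ToType → κ.ord.ToType)
    (hν_lt : ∀ i, ν i < μ) (hν_κ : ∀ i, κ < ν i) (hν_reg : ∀ i, (ν i).IsRegular)
    (hν_smono : StrictMono ν) (hν_cof : ∀ c < μ, ∃ i, c < ν i)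
    (hfib : ∀ i, #(idx ⁻¹' {i}) = ν i) :
    ∃ A : (μ.ord.ToType → κ.ord.ToType) → Set μ.ord.ToType,
      (∀ g, #(A g) = μ) ∧
      ∀ B : Set μ.ord.ToType, #B = μ → ∃ f : μ.ord.ToType → κ.ord.ToType,
        ∀ g, #{α | g α ≤ f α} < μ → #(B ∩ A g : Set μ.ord.ToType) = μ ∧
          #(B \ A g : Set μ.ord.ToType) = μ := by
  classical
  have hko_lim : Order.IsSuccLimit κ.ord := Cardinal.isSuccLimit_ord hκreg.aleph0_le
  have hcofk : κ.ord.cof = κ := hκreg.cof_eq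
  have hK : #κ.ord.ToType = κ := by rw [Cardinal.mk_toType, Cardinal.card_ord]
  have hM : #μ.ord.ToType = μ := by rw [Cardinal.mk_toType, Cardinal.card_ord]
  set tpn : κ.ord.ToType → Ordinal.{u} :=
    fun i => ((Ordinal.ToType.mk (o := κ.ord)).symm i : Set.Iio κ.ord).1 with htpn
  have htpn_lt : ∀ i, tpn i < κ.ord := fun i => ((Ordinal.ToType.mk (o := κ.ord)).symm i).2
  have htpn_smono : StrictMono tpn := fun i i' h => (Ordinal.ToType.mk (o := κ.ord)).symm.strictMono h
  set enm : ∀ x, x < κ.ord → κ.ord.ToType :=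
    fun x hx => (Ordinal.ToType.mk (o := κ.ord)) ⟨x, hx⟩ with henm
  have henm_tpn : ∀ x hx, tpn (enm x hx) = x := by
    intro x hx
    rw [htpn, henm]
    dsimp only
    rw [OrderIso.symm_apply_apply]
  -- counting within fibers
  have hcount : ∀ (T : Set μ.ord.ToType) (c : Cardinal.{u}),
      (∀ i, #(T ∩ idx ⁻¹' {i} : Set μ.ord.ToType) ≤ c) → #T ≤ κ * c := by
    intro T c hc
    have hcover : T ⊆ ⋃ i, (T ∩ idx ⁻¹' {i}) := by
      intro α hα
      exact Set.mem_iUnion.mpr ⟨idx α, hα, rfl⟩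
    calc #T ≤ #(⋃ i, (T ∩ idx ⁻¹' {i}) : Set μ.ord.ToType) := mk_le_mk_of_subset hcover
      _ ≤ Cardinal.sum (fun i => #(T ∩ idx ⁻¹' {i} : Set μ.ord.ToType)) :=
          Cardinal.mk_iUnion_le_sum_mk
      _ ≤ Cardinal.sum (fun _ : κ.ord.ToType => c) := Cardinal.sum_le_sum _ _ hc
      _ = #κ.ord.ToType * c := Cardinal.sum_const' _ _
      _ = κ * c := by rw [hK]
  have htail : ∀ (B : Set μ.ord.ToType), #B = μ → ∀ c, c < μ → ∀ i₂, ∃ i', i₂ < i' ∧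
      c ≤ #(B ∩ idx ⁻¹' {i'} : Set μ.ord.ToType) := by
    intro B hB c hc i₂
    by_contra hcon
    push_neg at hcon
    have hbound : ∀ i, #(B ∩ idx ⁻¹' {i} : Set μ.ord.ToType) ≤ max (ν i₂) c := by
      intro i
      rcases le_or_gt i i₂ with h | h
      · refine le_trans ?_ (le_max_left _ _)
        refine le_trans (mk_le_mk_of_subset Set.inter_subset_right) ?_
        rw [hfib i]
        exact hν_smono.monotone h
      · exact le_trans (hcon i h).le (le_max_right _ _)
    have h1 := hcount B _ hbound
    rw [hB] at h1
    exact absurd h1 (not_le.mpr (Cardinal.mul_lt_of_lt hμ hκμ (max_lt (hν_lt i₂) hc)))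
  -- pigeonhole: least concentration level
  have hghE : ∀ g : μ.ord.ToType → κ.ord.ToType, ∀ i : κ.ord.ToType, ∃ v : κ.ord.ToType,
      (ν i ≤ #{α | idx α = i ∧ g α ≤ v}) ∧
      ∀ v', ν i ≤ #{α | idx α = i ∧ g α ≤ v'} → v ≤ v' := by
    intro g i
    have hne : {v : κ.ord.ToType | ν i ≤ #{α | idx α = i ∧ g α ≤ v}}.Nonempty := by
      by_contra hcon
      rw [Set.not_nonempty_iff_eq_empty] at hcon
      have hall : ∀ v : κ.ord.ToType, #{α | idx α = i ∧ g α ≤ v} < ν i := by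
        intro v
        by_contra h'
        push_neg at h'
        exact Set.eq_empty_iff_forall_notMem.mp hcon v h'
      have hcover : (idx ⁻¹' {i}) ⊆ ⋃ v : κ.ord.ToType, {α | idx α = i ∧ g α ≤ v} := by
        intro α hα
        exact Set.mem_iUnion.mpr ⟨g α, hα, le_rfl⟩
      have h1 : ν i ≤ #(⋃ v : κ.ord.ToType, {α | idx α = i ∧ g α ≤ v} : Set μ.ord.ToType) := by
        rw [← hfib i]
        exact mk_le_mk_of_subset hcover
      have h2 := h1.trans Cardinal.mk_iUnion_le_sum_mk
      have h3 : Cardinal.sum (fun v : κ.ord.ToType => #{α | idx α = i ∧ g α ≤ v}) < ν i :=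
        Cardinal.sum_lt_of_isRegular (hν_reg i) (by rw [hK]; exact hν_κ i) hall
      exact absurd h2 h3.not_ge
    obtain ⟨v, hv, hvmin⟩ := (IsWellFounded.wf (r := ((· < ·) : κ.ord.ToType → κ.ord.ToType → Prop))).has_min _ hne
    exact ⟨v, hv, fun v' hv' => not_lt.mp (hvmin v' hv')⟩
  choose gh hgh1 hgh2 using hghE
  -- ordinal conjugate of gh g
  set gho : (μ.ord.ToType → κ.ord.ToType) → Ordinal.{u} → Ordinal.{u} :=
    fun g x => if hx : x < κ.ord then tpn (gh g (enm x hx)) else 0 with hgho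
  have hgho_lt : ∀ g x, gho g x < κ.ord := by
    intro g x
    rw [hgho]
    dsimp only
    split
    · exact htpn_lt _
    · exact hko_lim.pos
  have hgho_val : ∀ g x (hx : x < κ.ord), gho g x = tpn (gh g (enm x hx)) := by
    intro g x hx
    rw [hgho]
    exact dif_pos hx
  -- the jump function
  set F : (μ.ord.ToType → κ.ord.ToType) → Ordinal.{u} → Ordinal.{u} :=
    fun g x => (Ordinal.bsup.{u,u} (x + 1) fun y _ => gho g y) + x + 1 with hF
  have hF_lt : ∀ g x, x < κ.ord → F g x < κ.ord := by
    intro g x hx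
    have hb : (Ordinal.bsup.{u,u} (x + 1) fun y _ => gho g y) < κ.ord := by
      apply Ordinal.bsup_lt_ord
      · rw [hcofk]
        apply Cardinal.lt_ord.mp
        rw [Ordinal.add_one_eq_succ]
        exact hko_lim.succ_lt hx
      · intro y _
        exact hgho_lt g y
    rw [hF]
    dsimp only
    rw [Cardinal.lt_ord, Ordinal.card_add, Ordinal.card_add, Ordinal.card_one]
    apply Cardinal.add_lt_of_lt hκreg.aleph0_le
    · apply Cardinal.add_lt_of_lt hκreg.aleph0_le
      · exact Cardinal.lt_ord.mp hb
      · exact Cardinal.lt_ord.mp hx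
    · exact lt_of_lt_of_le Cardinal.one_lt_aleph0 hκreg.aleph0_le
  have hF_gt : ∀ g x, x < F g x := by
    intro g x
    rw [hF]
    dsimp only
    calc x < x + 1 := by rw [Ordinal.add_one_eq_succ]; exact Order.lt_succ x
      _ ≤ (Ordinal.bsup.{u,u} (x + 1) fun y _ => gho g y) + (x + 1) := le_add_self
      _ = (Ordinal.bsup.{u,u} (x + 1) fun y _ => gho g y) + x + 1 := by rw [add_assoc]
  have hF_gho : ∀ g x, gho g x < F g x := by
    intro g x
    rw [hF]
    dsimp only
    calc gho g x ≤ (Ordinal.bsup.{u,u} (x + 1) fun y _ => gho g y) :=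
          Ordinal.le_bsup _ x (by rw [Ordinal.add_one_eq_succ]; exact Order.lt_succ x)
      _ < (Ordinal.bsup.{u,u} (x + 1) fun y _ => gho g y) + x + 1 := by
          rw [add_assoc]
          conv_lhs => rw [← add_zero (Ordinal.bsup.{u,u} (x + 1) fun y _ => gho g y)]
          apply add_lt_add_right
          rw [Ordinal.add_one_eq_succ]
          exact Ordinal.succ_pos x
  -- iteration of F
  set j : (μ.ord.ToType → κ.ord.ToType) → Ordinal.{u} → Ordinal.{u} :=
    fun g => itF (F g) with hj
  have hj_def : ∀ g ξ, j g ξ = F g (Ordinal.bsup.{u,u} ξ fun y _ => j g y) := by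
    intro g ξ
    rw [hj]
    exact itF_def _ _
  have hj_smono : ∀ g, StrictMono (j g) := by
    intro g η ξ h
    calc j g η ≤ Ordinal.bsup.{u,u} ξ (fun y _ => j g y) := Ordinal.le_bsup _ η h
      _ < F g (Ordinal.bsup.{u,u} ξ fun y _ => j g y) := hF_gt g _
      _ = j g ξ := (hj_def g ξ).symm
  have hj_lt : ∀ g ξ, ξ < κ.ord → j g ξ < κ.ord := by
    intro g ξ
    induction ξ using Ordinal.induction with
    | _ ξ IH =>
      intro hξ
      rw [hj_def]
      apply hF_lt
      apply Ordinal.bsup_lt_ord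
      · rw [hcofk]
        exact Cardinal.lt_ord.mp hξ
      · intro y hy
        exact IH y hy (hy.trans hξ)
  have hj_succ : ∀ g ξ, j g (ξ + 1) = F g (j g ξ) := by
    intro g ξ
    rw [hj_def]
    congr 1
    apply le_antisymm
    · apply Ordinal.bsup_le
      intro y hy
      apply (hj_smono g).monotone
      rw [Ordinal.add_one_eq_succ] at hy
      exact Order.le_of_lt_succ hy
    · exact Ordinal.le_bsup _ ξ (by rw [Ordinal.add_one_eq_succ]; exact Order.lt_succ ξ)
  have hj_ge : ∀ g ξ, ξ ≤ j g ξ := fun g ξ => (hj_smono g).le_apply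
  -- interval index
  set Ii : (μ.ord.ToType → κ.ord.ToType) → Ordinal.{u} → Ordinal.{u} :=
    fun g x' => sInf {ξ | x' < j g (ξ + 1)} with hIi
  have hIi_ne : ∀ g x', {ξ | x' < j g (ξ + 1)}.Nonempty := by
    intro g x'
    refine ⟨x', ?_⟩
    have h1 : x' < x' + 1 := by rw [Ordinal.add_one_eq_succ]; exact Order.lt_succ x'
    exact h1.trans_le (hj_ge g (x' + 1))
  have hIi_spec : ∀ g ξ x', j g ξ ≤ x' → x' < j g (ξ + 1) → Ii g x' = ξ := by
    intro g ξ x' h1 h2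
    rw [hIi]
    dsimp only
    apply le_antisymm
    · exact csInf_le (OrderBot.bddBelow _) h2
    · by_contra hcon
      push_neg at hcon
      have hmem : x' < j g (sInf {ξ | x' < j g (ξ + 1)} + 1) := csInf_mem (hIi_ne g x')
      have hle : sInf {ξ | x' < j g (ξ + 1)} + 1 ≤ ξ := by
        rw [Ordinal.add_one_eq_succ]
        exact Order.succ_le_of_lt hcon
      exact absurd (hmem.trans_le (((hj_smono g).monotone hle).trans h1)) (lt_irrefl x')
  -- arithmetic helpers
  have h2κ : (2 : Cardinal) < κ := lt_of_lt_of_le (by simpa using Cardinal.nat_lt_aleph0 2) hκreg.aleph0_le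
  have h2z : ∀ z, z < κ.ord → 2 * z < κ.ord := by
    intro z hz
    rw [Cardinal.lt_ord, Ordinal.card_mul]
    apply Cardinal.mul_lt_of_lt hκreg.aleph0_le
    · simpa using h2κ
    · exact Cardinal.lt_ord.mp hz
  have h2z1 : ∀ z, z < κ.ord → 2 * z + 1 < κ.ord := by
    intro z hz
    rw [Cardinal.lt_ord, Ordinal.card_add, Ordinal.card_mul, Ordinal.card_one]
    apply Cardinal.add_lt_of_lt hκreg.aleph0_le
    · apply Cardinal.mul_lt_of_lt hκreg.aleph0_le
      · simpa using h2κ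
      · exact Cardinal.lt_ord.mp hz
    · exact lt_of_lt_of_le Cardinal.one_lt_aleph0 hκreg.aleph0_le
  have hz2z : ∀ z : Ordinal.{u}, z ≤ 2 * z := by
    intro z
    conv_lhs => rw [← one_mul z]
    exact mul_le_mul_left one_le_two z
  -- the splitting sets
  refine ⟨fun g => {α | ∃ q, Ii g (tpn (idx α)) = 2 * q}, ?_, ?_⟩
  · -- each A g has size μ
    intro g
    apply le_antisymm ((Cardinal.mk_set_le _).trans_eq hM)
    apply le_of_forall_lt
    intro c hc
    obtain ⟨i₁, hi₁⟩ := hν_cof c hc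
    have hξ : 2 * tpn i₁ < κ.ord := h2z _ (htpn_lt i₁)
    have hjξ := hj_lt g _ hξ
    have hti : tpn (enm (j g (2 * tpn i₁)) hjξ) = j g (2 * tpn i₁) := henm_tpn _ _
    have hzle : tpn i₁ ≤ j g (2 * tpn i₁) := (hz2z _).trans (hj_ge g _)
    have hii : i₁ ≤ enm (j g (2 * tpn i₁)) hjξ := by
      apply htpn_smono.le_iff_le.mp
      rw [hti]
      exact hzle
    have hci : c < ν (enm (j g (2 * tpn i₁)) hjξ) := hi₁.trans_le (hν_smono.monotone hii)
    have hIieq : Ii g (tpn (enm (j g (2 * tpn i₁)) hjξ)) = 2 * tpn i₁ := by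
      rw [hti]
      exact hIi_spec g _ _ le_rfl (by rw [hj_succ]; exact hF_gt g _)
    have hsub : (idx ⁻¹' {enm (j g (2 * tpn i₁)) hjξ}) ⊆
        {α | ∃ q, Ii g (tpn (idx α)) = 2 * q} := by
      intro α hα
      have hae : idx α = enm (j g (2 * tpn i₁)) hjξ := hα
      exact ⟨tpn i₁, by rw [hae, hIieq]⟩
    calc c < ν (enm (j g (2 * tpn i₁)) hjξ) := hci
      _ = #(idx ⁻¹' {enm (j g (2 * tpn i₁)) hjξ}) := (hfib _).symm
      _ ≤ #({α | ∃ q, Ii g (tpn (idx α)) = 2 * q} : Set μ.ord.ToType) :=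
          mk_le_mk_of_subset hsub
  · -- splitting property
    intro B hB
    choose w hw1 hw2 using fun i => htail B hB (ν i) (hν_lt i) i
    refine ⟨fun α => w (idx α), ?_⟩
    intro g hE
    obtain ⟨i₀, hi₀⟩ := hν_cof _ hE
    have hdom : ∀ i, i₀ ≤ i → w i < gh g i := by
      intro i hi
      by_contra hcon
      push_neg at hcon
      have hsub1 : {α | idx α = i ∧ g α ≤ gh g i} ⊆ {α | g α ≤ w (idx α)} := by
        rintro α ⟨ha1, ha2⟩
        rw [Set.mem_setOf_eq, ha1]
        exact ha2.trans hcon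
      have h1 : ν i ≤ #{α | g α ≤ w (idx α)} := (hgh1 g i).trans (mk_le_mk_of_subset hsub1)
      have h2 : ν i < ν i₀ := h1.trans_lt hi₀
      exact absurd (hν_smono.lt_iff_lt.mp h2) (not_lt.mpr hi)
    have hcore : ∀ ξ (hξ : ξ < κ.ord), tpn i₀ ≤ j g ξ →
        Ii g (tpn (w (enm (j g ξ) (hj_lt g ξ hξ)))) = ξ ∧
        ν (enm (j g ξ) (hj_lt g ξ hξ)) ≤
          #(B ∩ idx ⁻¹' {w (enm (j g ξ) (hj_lt g ξ hξ))} : Set μ.ord.ToType) := by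
      intro ξ hξ hge
      have hti : tpn (enm (j g ξ) (hj_lt g ξ hξ)) = j g ξ := henm_tpn _ _
      have hi₀i : i₀ ≤ enm (j g ξ) (hj_lt g ξ hξ) := by
        apply htpn_smono.le_iff_le.mp
        rw [hti]
        exact hge
      have h1 : j g ξ < tpn (w (enm (j g ξ) (hj_lt g ξ hξ))) := by
        have h1' := htpn_smono (hw1 (enm (j g ξ) (hj_lt g ξ hξ)))
        rwa [hti] at h1'
      have h2 : tpn (w (enm (j g ξ) (hj_lt g ξ hξ))) < j g (ξ + 1) := by
        have ha : tpn (w (enm (j g ξ) (hj_lt g ξ hξ))) < tpn (gh g (enm (j g ξ) (hj_lt g ξ hξ))) :=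
          htpn_smono (hdom _ hi₀i)
        have hb : tpn (gh g (enm (j g ξ) (hj_lt g ξ hξ))) = gho g (j g ξ) :=
          (hgho_val g _ (hj_lt g ξ hξ)).symm
        rw [hj_succ]
        rw [hb] at ha
        exact ha.trans (hF_gho g _)
      exact ⟨hIi_spec g ξ _ h1.le h2, hw2 _⟩
    constructor
    · -- B ∩ A g
      apply le_antisymm ((mk_le_mk_of_subset Set.inter_subset_left).trans_eq hB)
      apply le_of_forall_lt
      intro c hc
      obtain ⟨i₁, hi₁⟩ := hν_cof c hc
      have hzlt : max (tpn i₀) (tpn i₁) < κ.ord := max_lt (htpn_lt i₀) (htpn_lt i₁)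
      have hξ : 2 * max (tpn i₀) (tpn i₁) < κ.ord := h2z _ hzlt
      have hjξ := hj_lt g _ hξ
      have hzj : max (tpn i₀) (tpn i₁) ≤ j g (2 * max (tpn i₀) (tpn i₁)) :=
        (hz2z _).trans (hj_ge g _)
      have hge : tpn i₀ ≤ j g (2 * max (tpn i₀) (tpn i₁)) := (le_max_left _ _).trans hzj
      obtain ⟨hIiq, htr⟩ := hcore _ hξ hge
      have hti : tpn (enm (j g (2 * max (tpn i₀) (tpn i₁))) hjξ) =
          j g (2 * max (tpn i₀) (tpn i₁)) := henm_tpn _ _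
      have hii1 : i₁ ≤ enm (j g (2 * max (tpn i₀) (tpn i₁))) hjξ := by
        apply htpn_smono.le_iff_le.mp
        rw [hti]
        exact (le_max_right _ _).trans hzj
      have hsub : (B ∩ idx ⁻¹' {w (enm (j g (2 * max (tpn i₀) (tpn i₁))) hjξ)} : Set μ.ord.ToType)
          ⊆ (B ∩ {α | ∃ q, Ii g (tpn (idx α)) = 2 * q} : Set μ.ord.ToType) := by
        rintro α ⟨haB, haf⟩
        have hae : idx α = w (enm (j g (2 * max (tpn i₀) (tpn i₁))) hjξ) := haf
        exact ⟨haB, ⟨max (tpn i₀) (tpn i₁), by rw [hae, hIiq]⟩⟩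
      calc c < ν (enm (j g (2 * max (tpn i₀) (tpn i₁))) hjξ) :=
            hi₁.trans_le (hν_smono.monotone hii1)
        _ ≤ #(B ∩ idx ⁻¹' {w (enm (j g (2 * max (tpn i₀) (tpn i₁))) hjξ)} : Set μ.ord.ToType) :=
            htr
        _ ≤ #(B ∩ {α | ∃ q, Ii g (tpn (idx α)) = 2 * q} : Set μ.ord.ToType) :=
            mk_le_mk_of_subset hsub
    · -- B \ A g
      apply le_antisymm ((mk_le_mk_of_subset Set.diff_subset).trans_eq hB)
      apply le_of_forall_lt
      intro c hc
      obtain ⟨i₁, hi₁⟩ := hν_cof c hc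
      have hzlt : max (tpn i₀) (tpn i₁) < κ.ord := max_lt (htpn_lt i₀) (htpn_lt i₁)
      have hξ : 2 * max (tpn i₀) (tpn i₁) + 1 < κ.ord := h2z1 _ hzlt
      have hjξ := hj_lt g _ hξ
      have hzj : max (tpn i₀) (tpn i₁) ≤ j g (2 * max (tpn i₀) (tpn i₁) + 1) :=
        ((hz2z _).trans (le_self_add)).trans (hj_ge g _)
      have hge : tpn i₀ ≤ j g (2 * max (tpn i₀) (tpn i₁) + 1) := (le_max_left _ _).trans hzj
      obtain ⟨hIiq, htr⟩ := hcore _ hξ hge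
      have hti : tpn (enm (j g (2 * max (tpn i₀) (tpn i₁) + 1)) hjξ) =
          j g (2 * max (tpn i₀) (tpn i₁) + 1) := henm_tpn _ _
      have hii1 : i₁ ≤ enm (j g (2 * max (tpn i₀) (tpn i₁) + 1)) hjξ := by
        apply htpn_smono.le_iff_le.mp
        rw [hti]
        exact (le_max_right _ _).trans hzj
      have hsub : (B ∩ idx ⁻¹' {w (enm (j g (2 * max (tpn i₀) (tpn i₁) + 1)) hjξ)} :
            Set μ.ord.ToType)
          ⊆ (B \ {α | ∃ q, Ii g (tpn (idx α)) = 2 * q} : Set μ.ord.ToType) := by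
        rintro α ⟨haB, haf⟩
        have hae : idx α = w (enm (j g (2 * max (tpn i₀) (tpn i₁) + 1)) hjξ) := haf
        refine ⟨haB, ?_⟩
        intro hq
        obtain ⟨q, hq⟩ := hq
        rw [hae, hIiq] at hq
        exact not_evenO _ ⟨q, hq⟩
      calc c < ν (enm (j g (2 * max (tpn i₀) (tpn i₁) + 1)) hjξ) :=
            hi₁.trans_le (hν_smono.monotone hii1)
        _ ≤ #(B ∩ idx ⁻¹' {w (enm (j g (2 * max (tpn i₀) (tpn i₁) + 1)) hjξ)} :
              Set μ.ord.ToType) := htr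
        _ ≤ #(B \ {α | ∃ q, Ii g (tpn (idx α)) = 2 * q} : Set μ.ord.ToType) :=
            mk_le_mk_of_subset hsub

end SplitDomAux

/-- Let `μ` be a singular cardinal of cofinality `κ`.
Then `𝔰_μ ≤ 𝔡_μ`. -/
theorem splitNumber_le_domNumber (μ κ : Cardinal.{u})
    (hμ : ℵ₀ ≤ μ) (hsing : μ.ord.cof < μ) (hκ : μ.ord.cof = κ) :
    splitNumber μ ≤ domNumber μ κ := by
  classical
  have hκμ : κ < μ := hκ ▸ hsing
  have hκreg : κ.IsRegular := hκ ▸ Cardinal.isRegular_cof (Cardinal.isSuccLimit_ord hμ)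
  have hμlim : ∀ c < μ, Order.succ c < μ := by
    intro c hc
    rcases lt_or_eq_of_le (Order.succ_le_of_lt hc) with h | h
    · exact h
    · exfalso
      rcases lt_or_ge c ℵ₀ with hc0 | hc0
      · have h1 : Order.succ c < ℵ₀ := Cardinal.isSuccLimit_aleph0.succ_lt hc0
        rw [h] at h1
        exact absurd (h1.trans_le hμ) (lt_irrefl _)
      · have hreg := Cardinal.isRegular_succ hc0
        rw [h] at hreg
        rw [hreg.cof_eq] at hsing
        exact absurd hsing (lt_irrefl _)
  obtain ⟨ν, hν_lt, hν_κ, hν_reg, hν_smono, hν_cof, hsum⟩ :=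
    SplitDomAux.nu_exists hμ hκμ hκreg hκ hμlim
  obtain ⟨idx, hfib⟩ := SplitDomAux.fiber_exists ν hsum
  obtain ⟨A, hA1, hA2⟩ := SplitDomAux.key_aux hμ hκμ hκreg ν idx hν_lt hν_κ hν_reg hν_smono hν_cof hfib
  -- the dominating number is attained
  have hno : NoMaxOrder κ.ord.ToType := by
    apply Ordinal.toType_noMax_of_succ_lt
    exact fun a ha => (Cardinal.isSuccLimit_ord hκreg.aleph0_le).succ_lt ha
  have hDne : {c | ∃ D : Set (μ.ord.ToType → κ.ord.ToType),
      IsDominatingFamily μ κ D ∧ #D = c}.Nonempty := by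
    refine ⟨#(Set.univ : Set (μ.ord.ToType → κ.ord.ToType)), Set.univ, ?_, rfl⟩
    intro f
    choose sc hsc using fun v : κ.ord.ToType => exists_gt v
    refine ⟨fun α => sc (f α), Set.mem_univ _, ?_⟩
    have he : {α | sc (f α) ≤ f α} = (∅ : Set μ.ord.ToType) := by
      ext α
      simp only [Set.mem_setOf_eq, Set.mem_empty_iff_false, iff_false, not_le]
      exact hsc (f α)
    rw [he]
    simp only [Cardinal.mk_emptyCollection]
    exact Cardinal.aleph0_pos.trans_le hμ
  obtain ⟨D, hD, hDcard⟩ := csInf_mem hDne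
  have hsplit : IsSplittingFamily μ (A '' D) := by
    constructor
    · rintro A' ⟨g, _, rfl⟩
      exact hA1 g
    · intro B hBc
      obtain ⟨f, hf⟩ := hA2 B hBc
      obtain ⟨g, hgD, hgf⟩ := hD f
      obtain ⟨h1, h2⟩ := hf g hgf
      exact ⟨A g, ⟨g, hgD, rfl⟩, h1, h2⟩
  calc splitNumber μ ≤ #(A '' D) :=
        csInf_le (OrderBot.bddBelow _) ⟨A '' D, hsplit, rfl⟩
    _ ≤ #D := Cardinal.mk_image_le
    _ = domNumber μ κ := hDcard
end
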